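/- (Asymptotics of f² near the parabolic fixed point at infinity.) There exist constants C > 0 and C′ > 0 such that for every (x,y) ∈ ℝ² with |x| > C and |y| > C: x ≠ 1, the first coordinate of f(x,y) is ≠ 1 (so f²(x,y) is defined), and writing (x₂,y₂) := f²(x,y), one has |x₂ − x·(1 + (a−1)/x + (a+1)/y)| ≤ C′·|x|·(1/x² + 1/y²) and |y₂ − y·(1 + (a−1)/y + (a+1)/x)| ≤ C′·|y|/x². -/

import Mathlib

open Filter

/-- The birational map f(x,y) = (y(x+a)/(x-1), x+a-1). -/
noncomputable def birat (a : ℝ) (p : ℝ × ℝ) : ℝ × ℝ :=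
  (p.2 * (p.1 + a) / (p.1 - 1), p.1 + a - 1)

/-- The inverse map f⁻¹(x,y) = (y+1-a, x(y-a)/(y+1)). -/
noncomputable def biratInv (a : ℝ) (p : ℝ × ℝ) : ℝ × ℝ :=
  (p.2 + 1 - a, p.1 * (p.2 - a) / (p.2 + 1))

/-- The forward orbit of `p` is defined up to time `n`. -/
def orbitDefined (a : ℝ) (p : ℝ × ℝ) (n : ℕ) : Prop :=
  ∀ k < n, ((birat a)^[k] p).1 ≠ 1

def Rplus : Set (ℝ × ℝ) := {p | p.1 ≤ 1 ∧ p.2 ≤ 0}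
def Rminus : Set (ℝ × ℝ) := {p | 0 ≤ p.1 ∧ -1 ≤ p.2}
def Rzero : Set (ℝ × ℝ) := {p | 1 ≤ p.1 ∧ p.2 ≤ -1}
def Rone : Set (ℝ × ℝ) := {p | p.1 ≤ 0 ∧ 0 ≤ p.2}
def intRplus : Set (ℝ × ℝ) := {p | p.1 < 1 ∧ p.2 < 0}
def intRzero : Set (ℝ × ℝ) := {p | 1 < p.1 ∧ p.2 < -1}
def intRone : Set (ℝ × ℝ) := {p | p.1 < 0 ∧ 0 < p.2}

/-- `Rw 0 = R₀`, `Rw 1 = R₁`. -/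
def Rw (i : Fin 2) : Set (ℝ × ℝ) := if i = 0 then Rzero else Rone

/-- `intRw 0 = int R₀`, `intRw 1 = int R₁`. -/
def intRw (i : Fin 2) : Set (ℝ × ℝ) := if i = 0 then intRzero else intRone

/-- Euclidean distance on ℝ². -/
noncomputable def eucDist (p q : ℝ × ℝ) : ℝ :=
  Real.sqrt ((p.1 - q.1) ^ 2 + (p.2 - q.2) ^ 2)

lemma div_abs_le {n d M m B : ℝ} (hm : 0 < m) (hn : |n| ≤ M) (hd : m ≤ |d|)
    (hB : M / m ≤ B) : |n / d| ≤ B := by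
  rw [abs_div]
  exact le_trans (div_le_div₀ (le_trans (abs_nonneg n) hn) hn hm hd) hB

set_option maxHeartbeats 1000000 in
theorem stmt18 (a : ℝ) :
    ∃ C > (0 : ℝ), ∃ C' > (0 : ℝ), ∀ x y : ℝ, C < |x| → C < |y| →
      x ≠ 1 ∧ (birat a (x, y)).1 ≠ 1 ∧
      |(birat a (birat a (x, y))).1 - x * (1 + (a - 1) / x + (a + 1) / y)| ≤
        C' * |x| * (1 / x ^ 2 + 1 / y ^ 2) ∧
      |(birat a (birat a (x, y))).2 - y * (1 + (a - 1) / y + (a + 1) / x)| ≤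
        C' * |y| / x ^ 2 := by
  refine ⟨4 * |a| + 8, by positivity, 8 * (|a| + 1) + 1, by positivity, ?_⟩
  intro x y hx hy
  have ha0 : (0:ℝ) ≤ |a| := abs_nonneg a
  have hx8 : (8:ℝ) < |x| := by linarith
  have hy8 : (8:ℝ) < |y| := by linarith
  have hax : |a| < |x| / 4 := by linarith
  have hay : |a| < |y| / 4 := by linarith
  have hx0 : x ≠ 0 := by intro h; simp [h] at hx8; linarith
  have hy0 : y ≠ 0 := by intro h; simp [h] at hy8; linarith
  have hx1 : x ≠ 1 := by intro h; rw [h] at hx8; norm_num at hx8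
  have hxm1 : x - 1 ≠ 0 := sub_ne_zero.mpr hx1
  -- |y*(x+a) - (x-1)| ≥ |x|*|y|/2
  have habs1 : |y * (x + a)| = |y| * |x + a| := abs_mul _ _
  have habs2 : |x| - |a| ≤ |x + a| := by
    have := abs_sub_abs_le_abs_sub x (-a); simpa using this
  have habs3 : |x - 1| ≤ |x| + 1 := by
    calc |x - 1| ≤ |x| + |(1:ℝ)| := abs_sub _ _
    _ = |x| + 1 := by norm_num
  have hD : |x| * |y| / 2 ≤ |y * (x + a) - (x - 1)| := by
    have h4 := abs_sub_abs_le_abs_sub (y * (x + a)) (x - 1)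
    have h5 : |x| * |x| / 4 ≥ 0 := by positivity
    nlinarith [mul_pos (by linarith : (0:ℝ) < |x|) (by linarith : (0:ℝ) < |y|),
      mul_le_mul_of_nonneg_left habs2 (abs_nonneg y),
      mul_lt_mul_of_pos_left hax (by linarith : (0:ℝ) < |y|)]
  have hD0 : y * (x + a) - (x - 1) ≠ 0 := by
    intro h
    rw [h, abs_zero] at hD
    nlinarith [mul_pos (by linarith : (0:ℝ) < |x|) (by linarith : (0:ℝ) < |y|)]
  have hq : y * (x + a) / (x - 1) - 1 ≠ 0 := by
    rw [div_sub_one hxm1]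
    exact div_ne_zero hD0 hxm1
  have hb1 : (birat a (x, y)).1 ≠ 1 := by
    simp only [birat]
    intro h
    exact hq (by rw [h]; ring)
  refine ⟨hx1, hb1, ?_, ?_⟩
  · -- x estimate
    have hid : (birat a (birat a (x, y))).1 - x * (1 + (a - 1) / x + (a + 1) / y) =
        ((a + 1) * (x ^ 2 - x - y * (2 * x + a - 1))) / (y * (y * (x + a) - (x - 1))) := by
      simp only [birat]
      rw [div_sub_one hxm1]
      field_simp [show (x + a) * y - (x - 1) ≠ 0 by rwa [mul_comm]]
      ring
    rw [hid]
    have hnum : |(a + 1) * (x ^ 2 - x - y * (2 * x + a - 1))| ≤ (|a| + 1) * 4 * (x ^ 2 + y ^ 2) := by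
      rw [abs_mul]
      have h1 : |a + 1| ≤ |a| + 1 := by
        calc |a + 1| ≤ |a| + |(1:ℝ)| := abs_add_le _ _
        _ = |a| + 1 := by norm_num
      have h2 : |x ^ 2 - x - y * (2 * x + a - 1)| ≤ 4 * (x ^ 2 + y ^ 2) := by
        have t1 : |x ^ 2 - x - y * (2 * x + a - 1)| ≤ |x ^ 2 - x| + |y * (2 * x + a - 1)| :=
          abs_sub _ _
        have t2 : |x ^ 2 - x| ≤ |x| ^ 2 + |x| := by
          calc |x ^ 2 - x| ≤ |x ^ 2| + |x| := abs_sub _ _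
          _ = |x| ^ 2 + |x| := by rw [abs_pow]
        have t3 : |2 * x + a - 1| ≤ 2 * |x| + |a| + 1 := by
          calc |2 * x + a - 1| ≤ |2 * x + a| + |(1:ℝ)| := abs_sub _ _
          _ ≤ |2 * x| + |a| + 1 := by simp; simpa [abs_mul] using abs_add_le (2 * x) a
          _ = 2 * |x| + |a| + 1 := by rw [abs_mul]; norm_num
        have t4 : |y * (2 * x + a - 1)| ≤ |y| * (2 * |x| + |a| + 1) := by
          rw [abs_mul]
          exact mul_le_mul_of_nonneg_left t3 (abs_nonneg y)
        nlinarith [sq_abs x, sq_abs y, sq_nonneg (|x| - |y|),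
          mul_lt_mul_of_pos_left hax (by linarith : (0:ℝ) < |y|),
          mul_pos (by linarith : (0:ℝ) < |x|) (by linarith : (0:ℝ) < |y|)]
      calc |a + 1| * |x ^ 2 - x - y * (2 * x + a - 1)| ≤ (|a| + 1) * (4 * (x ^ 2 + y ^ 2)) :=
        mul_le_mul h1 h2 (abs_nonneg _) (by positivity)
      _ = (|a| + 1) * 4 * (x ^ 2 + y ^ 2) := by ring
    have hden : |x| * y ^ 2 / 2 ≤ |y * (y * (x + a) - (x - 1))| := by
      rw [abs_mul]
      calc |x| * y ^ 2 / 2 = |y| * (|x| * |y| / 2) := by rw [← sq_abs y]; ring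
      _ ≤ |y| * |y * (x + a) - (x - 1)| := by
        apply mul_le_mul_of_nonneg_left hD (abs_nonneg y)
    apply div_abs_le (by positivity) hnum hden
    have hrhs : (8 * (|a| + 1) + 1) * |x| * (1 / x ^ 2 + 1 / y ^ 2) =
        (8 * (|a| + 1) + 1) * (x ^ 2 + y ^ 2) / (|x| * y ^ 2) := by
      rw [← sq_abs x, ← sq_abs y]
      field_simp [abs_ne_zero.mpr hx0, abs_ne_zero.mpr hy0]
      ring
    rw [hrhs, div_div_eq_mul_div]
    apply div_le_div_of_nonneg_right ?_ (by positivity)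
    nlinarith [sq_nonneg x, sq_nonneg y]
  · -- y estimate
    have hid : (birat a (birat a (x, y))).2 - y * (1 + (a - 1) / y + (a + 1) / x) =
        (y * (a + 1)) / (x * (x - 1)) := by
      simp only [birat]
      field_simp
      ring
    rw [hid]
    have hnum : |y * (a + 1)| ≤ |y| * (|a| + 1) := by
      rw [abs_mul]
      have : |a + 1| ≤ |a| + 1 := by
        calc |a + 1| ≤ |a| + |(1:ℝ)| := abs_add_le _ _
        _ = |a| + 1 := by norm_num
      exact mul_le_mul_of_nonneg_left this (abs_nonneg y)
    have hden : x ^ 2 / 2 ≤ |x * (x - 1)| := by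
      rw [abs_mul, ← sq_abs x]
      have h1 : |x| - 1 ≤ |x - 1| := by
        have := abs_sub_abs_le_abs_sub x 1; simpa using this
      nlinarith [abs_nonneg (x - 1)]
    apply div_abs_le (by positivity) hnum hden
    rw [div_div_eq_mul_div]
    apply div_le_div_of_nonneg_right ?_ (by positivity)
    nlinarith [abs_nonneg y]
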